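/- arXiv:1207.1255 — 3 statements merged into one kernel-verified Lean document; each statement's English description precedes it below -/
import Mathlib

section
/- Annihilation catch-raise: for every f : X → Y ⊕ E and index i, handling f by re-raising, i.e., tryWith f (Sum.elim (Sum.inr ∘ t i) Sum.inr ∘ c i), equals f. Catching an exception of index i and immediately re-throwing it is the same as doing nothing. -/
def tagE {I : Type} {P : I → Type} (i : I) (a : P i) : (Σ j, P j) := ⟨i, a⟩

def untagE {I : Type} [DecidableEq I] {P : I → Type} (i : I)
    (e : Σ j, P j) : P i ⊕ (Σ j, P j) :=
  if h : e.1 = i then Sum.inl (h ▸ e.2) else Sum.inr e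

def tryWith {X Y E : Type} (f : X → Y ⊕ E) (k : E → Y ⊕ E) : X → Y ⊕ E :=
  Sum.elim Sum.inl k ∘ f

theorem annihilation_catch_raise {I : Type} [DecidableEq I] {P : I → Type}
    {X Y : Type} (f : X → Y ⊕ (Σ j, P j)) (i : I) :
    tryWith f (Sum.elim (Sum.inr ∘ tagE i) Sum.inr ∘ untagE i) = f := by
  funext x
  simp only [tryWith, Function.comp]
  cases f x with
  | inl y => rfl
  | inr e =>
    show Sum.elim (Sum.inr ∘ tagE i) Sum.inr (untagE i e) = Sum.inr e
    unfold untagE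
    split
    · next h => cases e; subst h; rfl
    · rfl
end

section
/- Commutation catch-catch: for distinct indices i ≠ j, any f : X → Y ⊕ E and handlers g : P i → Y ⊕ E, h : P j → Y ⊕ E, handling f with catch clauses (i ⇒ g, j ⇒ h) equals handling f with catch clauses (j ⇒ h, i ⇒ g). Explicitly, tryWith f (Sum.elim g (Sum.elim h Sum.inr ∘ c j) ∘ c i) = tryWith f (Sum.elim h (Sum.elim g Sum.inr ∘ c i) ∘ c j). -/
theorem commutation_catch_catch {I : Type} [DecidableEq I] {P : I → Type}
    {X Y : Type} (i j : I) (hij : i ≠ j) (f : X → Y ⊕ (Σ l, P l))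
    (g : P i → Y ⊕ (Σ l, P l)) (h : P j → Y ⊕ (Σ l, P l)) :
    tryWith f (Sum.elim g (Sum.elim h Sum.inr ∘ untagE j) ∘ untagE i)
      = tryWith f (Sum.elim h (Sum.elim g Sum.inr ∘ untagE i) ∘ untagE j) := by
  funext x
  simp only [tryWith, Function.comp_apply]
  cases hfx : f x with
  | inl y => simp
  | inr e =>
    simp only [Sum.elim_inr, Function.comp_apply]
    rcases e with ⟨l, a⟩
    unfold untagE
    by_cases hi : l = i
    · subst hi
      simp [hij, Ne.symm hij]
    · by_cases hj : l = j
      · subst hj; simp [hi]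
      · simp [hi, hj]
end

section
/- First-match semantics of multi-clause handlers: with kₚ defined recursively by k_{n+1} := Sum.inr and kₚ := Sum.elim gₚ k_{p+1} ∘ c iₚ, if e = t (i_q) a for some clause q and q is minimal with this property (i.e., iₚ ≠ i_q for all p < q), then k₁ e = g_q a. -/
def handlerRec {I : Type} [DecidableEq I] {P : I → Type} {Y : Type}
    (n : ℕ) (idx : Fin n → I) (g : ∀ p : Fin n, P (idx p) → Y ⊕ (Σ j, P j))
    (p : ℕ) : (Σ j, P j) → Y ⊕ (Σ j, P j) :=
  if h : p < n then
    Sum.elim (g ⟨p, h⟩) (handlerRec n idx g (p + 1)) ∘ untagE (idx ⟨p, h⟩)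
  else Sum.inr
termination_by n - p

lemma first_match_aux {I : Type} [DecidableEq I] {P : I → Type} {Y : Type}
    (n : ℕ) (idx : Fin n → I) (g : ∀ p : Fin n, P (idx p) → Y ⊕ (Σ j, P j))
    (q : Fin n) (a : P (idx q)) (hmin : ∀ p : Fin n, p < q → idx p ≠ idx q)
    (k p : ℕ) (hk : q.1 - p = k) (hpq : p ≤ q.1) :
    handlerRec n idx g p (tagE (idx q) a) = g q a := by
  induction k generalizing p with
  | zero =>
    have hp : p = q.1 := le_antisymm hpq (by omega)
    subst hp
    rw [handlerRec]
    have h : q.1 < n := q.2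
    simp only [h, dif_pos, Fin.eta, Function.comp_apply]
    simp [untagE, tagE]
  | succ k ih =>
    have hplt : p < q.1 := by omega
    have h : p < n := lt_trans hplt q.2
    rw [handlerRec]
    simp only [h, dif_pos, Function.comp_apply]
    have hne : (tagE (idx q) a).1 ≠ idx ⟨p, h⟩ := by
      exact fun he => hmin ⟨p, h⟩ hplt he.symm
    rw [untagE, dif_neg hne]
    simp only [Sum.elim_inr]
    exact ih (p + 1) (by omega) (by omega)

theorem first_match_semantics {I : Type} [DecidableEq I] {P : I → Type} {Y : Type}
    (n : ℕ) (idx : Fin n → I) (g : ∀ p : Fin n, P (idx p) → Y ⊕ (Σ j, P j))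
    (q : Fin n) (a : P (idx q)) (hmin : ∀ p : Fin n, p < q → idx p ≠ idx q) :
    handlerRec n idx g 0 (tagE (idx q) a) = g q a :=
  first_match_aux n idx g q a hmin q.1 0 rfl (Nat.zero_le _)
end
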